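/- arXiv:0812.2281 — 2 statements merged into one kernel-verified Lean document; each statement's English description precedes it below -/
import Mathlib

section
/- For any real number θ, the set Bad⁺_θ := {x ∈ ℝ : ∃ c > 0 such that for every natural number q ≥ 1, ‖θq − x‖_ℤ ≥ c/q} is an 1/8-winning set for Schmidt's game on ℝ. -/
/-- `normZ x = ‖x‖_ℤ` is the distance from `x` to the nearest integer. -/
noncomputable def normZ (x : ℝ) : ℝ := ⨅ p : ℤ, |x - (p : ℝ)|

/-- `Bad⁺_θ`: the set of `x` such that for some `c > 0`,
`‖θq − x‖_ℤ ≥ c/q` for all natural numbers `q ≥ 1`. -/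
def BadPlus (θ : ℝ) : Set ℝ :=
  {x : ℝ | ∃ c > 0, ∀ q : ℕ, 1 ≤ q → normZ (θ * q - x) ≥ c / q}

/-- A pair `(c, r)` represents the closed ball of center `c` and radius `r` in `ℝ`. -/
def ballOf (B : ℝ × ℝ) : Set ℝ := Metric.closedBall B.1 B.2

/-- `S` is `(α,β)`-winning for Schmidt's game on `ℝ`: White has a strategy `f`
(assigning to each finite history of Black's moves a ball) such that, whenever Black
plays legally (the initial Black ball has positive radius, and each subsequent Black
ball is contained in the previous White ball and has radius `β` times that of the
White ball), White's moves are legal (each White ball is contained in the current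
Black ball and has radius `α` times that of the Black ball) and the intersection of
all the balls lies in `S`. -/
def SchmidtWinning (α β : ℝ) (S : Set ℝ) : Prop :=
  ∃ f : List (ℝ × ℝ) → ℝ × ℝ,
    ∀ B : ℕ → ℝ × ℝ,
      (0 < (B 0).2) →
      (∀ n : ℕ,
        (B (n + 1)).2 = β * (f (List.ofFn (fun i : Fin (n + 1) => B i))).2 ∧
        ballOf (B (n + 1)) ⊆ ballOf (f (List.ofFn (fun i : Fin (n + 1) => B i)))) →
      ((∀ n : ℕ,
        (f (List.ofFn (fun i : Fin (n + 1) => B i))).2 = α * (B n).2 ∧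
        ballOf (f (List.ofFn (fun i : Fin (n + 1) => B i))) ⊆ ballOf (B n)) ∧
        (⋂ n : ℕ, ballOf (B n)) ⊆ S)

/-- `S` is `α`-winning if it is `(α,β)`-winning for every `β` with `0 < β < 1`. -/
def SchmidtAlphaWinning (α : ℝ) (S : Set ℝ) : Prop :=
  ∀ β : ℝ, 0 < β → β < 1 → SchmidtWinning α β S

namespace SchmidtAux

noncomputable def eta (θ : ℝ) (k : ℕ) : ℝ := |(k : ℝ) * θ - round ((k : ℝ) * θ)|

open Classical in
noncomputable def KK (θ : ℝ) : ℕ → ℕ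
  | 0 => 1
  | i + 1 =>
    if h : ∃ k, 0 < k ∧ eta θ k < eta θ (KK θ i) then Nat.find h else 0

noncomputable def sep (θ : ℝ) : ℕ → ℝ
  | 0 => 1
  | i + 1 => eta θ (KK θ i)

def Gset (θ : ℝ) (i : ℕ) : Set ℝ :=
  {y | ∃ (q : ℕ) (p : ℤ), q < KK θ i ∧ y = (q : ℝ) * θ - (p : ℝ)}

variable {θ : ℝ}

lemma eta_nonneg (k : ℕ) : 0 ≤ eta θ k := abs_nonneg _

lemma eta_le (k : ℕ) (z : ℤ) : eta θ k ≤ |(k : ℝ) * θ - (z : ℝ)| := round_le _ z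

lemma eta_pos (hirr : Irrational θ) {k : ℕ} (hk : 0 < k) : 0 < eta θ k := by
  have h : Irrational ((k : ℝ) * θ) := hirr.natCast_mul hk.ne'
  have := h.ne_int (round ((k : ℝ) * θ))
  have hne : (k : ℝ) * θ - round ((k : ℝ) * θ) ≠ 0 := sub_ne_zero.mpr this
  exact abs_pos.mpr hne

lemma exists_eta_lt (hirr : Irrational θ) {ε : ℝ} (hε : 0 < ε) :
    ∃ k, 0 < k ∧ eta θ k < ε := by
  obtain ⟨n, hn⟩ := exists_nat_one_div_lt hε
  have npos : 0 < n + 1 := Nat.succ_pos n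
  obtain ⟨k, hk0, hkn, hk⟩ := Real.exists_nat_abs_mul_sub_round_le θ npos
  refine ⟨k, hk0, lt_of_le_of_lt ?_ hn⟩
  calc eta θ k ≤ 1 / ((n + 1 : ℕ) + 1) := hk
    _ ≤ 1 / (n + 1) := by
        apply div_le_div_of_nonneg_left one_pos.le
        · positivity
        · push_cast; linarith

lemma KK_pos (hirr : Irrational θ) : ∀ i, 0 < KK θ i := by
  intro i
  induction i with
  | zero => exact one_pos
  | succ i ih =>
    have h : ∃ k, 0 < k ∧ eta θ k < eta θ (KK θ i) :=
      exists_eta_lt hirr (eta_pos hirr ih)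
    rw [KK, dif_pos h]
    exact (Nat.find_spec h).1

lemma exK (hirr : Irrational θ) (i : ℕ) :
    ∃ k, 0 < k ∧ eta θ k < eta θ (KK θ i) :=
  exists_eta_lt hirr (eta_pos hirr (KK_pos hirr i))

lemma KK_succ (hirr : Irrational θ) (i : ℕ) :
    KK θ (i + 1) = Nat.find (exK hirr i) := by
  rw [KK, dif_pos (exK hirr i)]

lemma eta_KK_succ_lt (hirr : Irrational θ) (i : ℕ) :
    eta θ (KK θ (i + 1)) < eta θ (KK θ i) := by
  rw [KK_succ hirr i]
  exact (Nat.find_spec (exK hirr i)).2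

/-- minimality: any positive `k` below `KK (i+1)` has `eta k ≥ eta (KK i)`. -/
lemma eta_ge_of_lt (hirr : Irrational θ) {i k : ℕ} (hk : 0 < k)
    (hlt : k < KK θ (i + 1)) : eta θ (KK θ i) ≤ eta θ k := by
  rw [KK_succ hirr i] at hlt
  have := Nat.find_min (exK hirr i) hlt
  push_neg at this
  exact this hk

/-- `KK i` minimizes `eta` over `[1, KK i]`. -/
lemma eta_KK_min (hirr : Irrational θ) :
    ∀ i k, 0 < k → k ≤ KK θ i → eta θ (KK θ i) ≤ eta θ k := by
  intro i
  induction i with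
  | zero =>
    intro k hk hk1
    have : k = 1 := le_antisymm hk1 hk
    simp [KK, this]
  | succ i ih =>
    intro k hk hkle
    rcases lt_or_eq_of_le hkle with h | h
    · exact le_trans (eta_KK_succ_lt hirr i).le (eta_ge_of_lt hirr hk h)
    · rw [h]

lemma KK_lt_succ (hirr : Irrational θ) (i : ℕ) : KK θ i < KK θ (i + 1) := by
  by_contra h
  push_neg at h
  have h1 := eta_KK_min hirr i (KK θ (i + 1)) (KK_pos hirr (i + 1)) h
  exact absurd (eta_KK_succ_lt hirr i) (not_lt.mpr h1)

lemma KK_mono (hirr : Irrational θ) {i j : ℕ} (h : i ≤ j) : KK θ i ≤ KK θ j := by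
  induction j with
  | zero => simp_all
  | succ j ih =>
    rcases eq_or_lt_of_le h with h' | h'
    · rw [h']
    · exact le_trans (ih (Nat.lt_succ_iff.mp h')) (KK_lt_succ hirr j).le

lemma lt_KK (hirr : Irrational θ) (i : ℕ) : i < KK θ i := by
  induction i with
  | zero => simp [KK]
  | succ i ih => exact lt_of_le_of_lt (Nat.succ_le_of_lt ih) (KK_lt_succ hirr i)

lemma sep_pos (hirr : Irrational θ) (i : ℕ) : 0 < sep θ i := by
  cases i with
  | zero => exact one_pos
  | succ i => exact eta_pos hirr (KK_pos hirr i)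

lemma sep_le_one (i : ℕ) : sep θ i ≤ 1 := by
  cases i with
  | zero => exact le_refl 1
  | succ i => exact le_trans (abs_sub_round _) (by norm_num)

lemma sep_succ_lt (hirr : Irrational θ) (i : ℕ) : sep θ (i + 1) < sep θ i := by
  cases i with
  | zero =>
    have h1 : sep θ 1 = eta θ 1 := by simp [sep, KK]
    have h2 : sep θ 0 = 1 := rfl
    rw [h1, h2]
    exact lt_of_le_of_lt (abs_sub_round _) (by norm_num)
  | succ i => exact eta_KK_succ_lt hirr i

lemma sep_antitone (hirr : Irrational θ) {i j : ℕ} (h : i ≤ j) : sep θ j ≤ sep θ i := by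
  induction j with
  | zero => simp_all
  | succ j ih =>
    rcases eq_or_lt_of_le h with h' | h'
    · rw [h']
    · exact le_trans (sep_succ_lt hirr j).le (ih (Nat.lt_succ_iff.mp h'))

lemma exists_sep_lt (hirr : Irrational θ) {ε : ℝ} (hε : 0 < ε) :
    ∃ j, sep θ (j + 1) < ε := by
  obtain ⟨k, hk0, hk⟩ := exists_eta_lt hirr hε
  refine ⟨k, lt_of_le_of_lt ?_ hk⟩
  exact eta_KK_min hirr k k hk0 (lt_KK hirr k).le

/-- Key inequality: `2 * KK i * sep i ≥ 1`. -/
lemma key_ineq (hirr : Irrational θ) (i : ℕ) : 1 ≤ 2 * (KK θ i : ℝ) * sep θ i := by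
  cases i with
  | zero =>
    rw [show KK θ 0 = 1 from rfl, show sep θ 0 = 1 from rfl]
    norm_num
  | succ i =>
    set A := KK θ i with hA
    set B := KK θ (i + 1) with hB
    set x := (A : ℝ) * θ with hx
    set y := (B : ℝ) * θ with hy
    set a' := x - (round x : ℝ) with ha'
    set b' := y - (round y : ℝ) with hb'
    have hetaA : eta θ A = |a'| := rfl
    have hetaB : eta θ B = |b'| := rfl
    have hApos : 0 < A := KK_pos hirr i
    have hBpos : 0 < B := KK_pos hirr (i + 1)
    have hAB : A < B := KK_lt_succ hirr i
    have hblt : |b'| < |a'| := by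
      rw [← hetaA, ← hetaB]; exact eta_KK_succ_lt hirr i
    have ha'pos : 0 < |a'| := by rw [← hetaA]; exact eta_pos hirr hApos
    have hb'pos : 0 < |b'| := by rw [← hetaB]; exact eta_pos hirr hBpos
    -- opposite signs
    have hsign : a' * b' < 0 := by
      by_contra hcon
      push_neg at hcon
      -- same (weak) signs; derive contradiction via m = B - A
      have hm0 : 0 < B - A := Nat.sub_pos_of_lt hAB
      have hmB : B - A < B := by omega
      have hcast : ((B - A : ℕ) : ℝ) = (B : ℝ) - (A : ℝ) := by
        push_cast [Nat.cast_sub hAB.le]; ring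
      have hideq : ((B - A : ℕ) : ℝ) * θ - ((round y - round x : ℤ) : ℝ) = b' - a' := by
        rw [hcast]; push_cast; rw [hb', ha', hy, hx]; ring
      have h1 : eta θ (B - A) ≤ |b' - a'| := by
        calc eta θ (B - A) ≤ |((B - A : ℕ) : ℝ) * θ - ((round y - round x : ℤ) : ℝ)| :=
              eta_le _ _
          _ = |b' - a'| := by rw [hideq]
      have h2 : eta θ A ≤ eta θ (B - A) := eta_ge_of_lt hirr hm0 hmB
      have h3 : |b' - a'| < |a'| := by
        have habsmul : |a' * b'| = a' * b' := abs_of_nonneg hcon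
        have : |a'| * |b'| = a' * b' := by rw [← abs_mul]; exact habsmul
        have hsq : (b' - a') ^ 2 < a' ^ 2 := by
          have h4 : a' ^ 2 = |a'| ^ 2 := (sq_abs a').symm
          have h5 : b' ^ 2 = |b'| ^ 2 := (sq_abs b').symm
          nlinarith [hb'pos, hblt, this]
        exact sq_lt_sq.mp hsq
      rw [hetaA] at h2
      linarith [le_trans h2 h1]
    -- determinant
    set D : ℤ := (A : ℤ) * round y - (B : ℤ) * round x with hD
    have hDval : (D : ℝ) = (B : ℝ) * a' - (A : ℝ) * b' := by
      push_cast [hD]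
      rw [ha', hb', hx, hy]; ring
    have hDne : D ≠ 0 := by
      intro h0
      rw [h0] at hDval
      simp only [Int.cast_zero] at hDval
      have hBa : (B : ℝ) * a' = (A : ℝ) * b' := by linarith
      have hApos' : (0 : ℝ) < A := by exact_mod_cast hApos
      have hBpos' : (0 : ℝ) < B := by exact_mod_cast hBpos
      have h5 : (B : ℝ) * (a' * b') < 0 := mul_neg_of_pos_of_neg hBpos' hsign
      have h6 : (B : ℝ) * (a' * b') = (A : ℝ) * b' ^ 2 := by
        rw [← mul_assoc, hBa]; ring
      have h7 : 0 ≤ (A : ℝ) * b' ^ 2 := by positivity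
      linarith
    have hone : (1 : ℝ) ≤ |(D : ℝ)| := by
      have := Int.one_le_abs hDne
      calc (1 : ℝ) = ((1 : ℤ) : ℝ) := by norm_num
        _ ≤ ((|D| : ℤ) : ℝ) := by exact_mod_cast this
        _ = |(D : ℝ)| := by push_cast; rfl
    have htri : |(D : ℝ)| ≤ (B : ℝ) * |a'| + (A : ℝ) * |b'| := by
      rw [hDval]
      calc |(B : ℝ) * a' - (A : ℝ) * b'| ≤ |(B : ℝ) * a'| + |(A : ℝ) * b'| := abs_sub _ _
        _ = (B : ℝ) * |a'| + (A : ℝ) * |b'| := by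
            rw [abs_mul, abs_mul, Nat.abs_cast, Nat.abs_cast]
    have hABle : (A : ℝ) ≤ (B : ℝ) := by exact_mod_cast hAB.le
    have : (A : ℝ) * |b'| ≤ (B : ℝ) * |a'| :=
      mul_le_mul hABle hblt.le (abs_nonneg _) (by positivity)
    have hfin : (1 : ℝ) ≤ 2 * (B : ℝ) * |a'| := by linarith [le_trans hone htri]
    have hsepeq : sep θ (i + 1) = |a'| := rfl
    rw [hsepeq]
    exact hfin

/-- Separation of the grid `Gset i`. -/
lemma Gset_sep (hirr : Irrational θ) {i : ℕ} {y y' : ℝ}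
    (hy : y ∈ Gset θ i) (hy' : y' ∈ Gset θ i) (hne : y ≠ y') :
    sep θ i ≤ |y - y'| := by
  obtain ⟨q, p, hq, rfl⟩ := hy
  obtain ⟨q', p', hq', rfl⟩ := hy'
  -- wlog via a symmetric helper
  rcases lt_trichotomy q q' with h | h | h
  · rw [abs_sub_comm]
    have hm0 : 0 < q' - q := Nat.sub_pos_of_lt h
    have hmlt : q' - q < KK θ i := lt_of_le_of_lt (Nat.sub_le _ _) hq'
    have hideq : ((q' - q : ℕ) : ℝ) * θ - ((p' - p : ℤ) : ℝ)
        = ((q' : ℝ) * θ - (p' : ℝ)) - ((q : ℝ) * θ - (p : ℝ)) := by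
      push_cast [Nat.cast_sub h.le]; ring
    have h1 : eta θ (q' - q) ≤ |((q' : ℝ) * θ - (p' : ℝ)) - ((q : ℝ) * θ - (p : ℝ))| := by
      rw [← hideq]; exact eta_le _ _
    refine le_trans ?_ h1
    cases i with
    | zero =>
      exfalso; rw [show KK θ 0 = 1 from rfl] at hq'; omega
    | succ i => exact eta_ge_of_lt hirr hm0 hmlt
  · subst h
    have hpp : p ≠ p' := by
      intro h; apply hne; rw [h]
    have : ((q : ℝ) * θ - p) - ((q : ℝ) * θ - p') = ((p' - p : ℤ) : ℝ) := by push_cast; ring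
    rw [this]
    have : (1 : ℝ) ≤ |((p' - p : ℤ) : ℝ)| := by
      have : p' - p ≠ 0 := sub_ne_zero.mpr (Ne.symm hpp)
      calc (1 : ℝ) = ((1 : ℤ) : ℝ) := by norm_num
        _ ≤ ((|p' - p| : ℤ) : ℝ) := by exact_mod_cast Int.one_le_abs this
        _ = |((p' - p : ℤ) : ℝ)| := by push_cast; rfl
    exact le_trans (sep_le_one i) this
  · have hm0 : 0 < q - q' := Nat.sub_pos_of_lt h
    have hmlt : q - q' < KK θ i := lt_of_le_of_lt (Nat.sub_le _ _) hq
    have hideq : ((q - q' : ℕ) : ℝ) * θ - ((p - p' : ℤ) : ℝ)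
        = ((q : ℝ) * θ - (p : ℝ)) - ((q' : ℝ) * θ - (p' : ℝ)) := by
      push_cast [Nat.cast_sub h.le]; ring
    have h1 : eta θ (q - q') ≤ |((q : ℝ) * θ - (p : ℝ)) - ((q' : ℝ) * θ - (p' : ℝ))| := by
      rw [← hideq]; exact eta_le _ _
    refine le_trans ?_ h1
    cases i with
    | zero =>
      exfalso; rw [show KK θ 0 = 1 from rfl] at hq; omega
    | succ i => exact eta_ge_of_lt hirr hm0 hmlt


/-! ### Level selection -/

open Classical in
noncomputable def Jlev (θ : ℝ) (r : ℝ) : ℕ :=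
  if h : ∃ j, sep θ (j + 1) < 10 * r then Nat.find h else 0

lemma Jlev_ge (hirr : Irrational θ) {r : ℝ} (hr : 0 < r) {i : ℕ}
    (h : 10 * r ≤ sep θ i) : i ≤ Jlev θ r := by
  have hex : ∃ j, sep θ (j + 1) < 10 * r := exists_sep_lt hirr (by linarith)
  rw [Jlev, dif_pos hex]
  by_contra hcon
  push_neg at hcon
  have h1 : Nat.find hex + 1 ≤ i := hcon
  have h2 : sep θ i ≤ sep θ (Nat.find hex + 1) := sep_antitone hirr h1
  have h3 := Nat.find_spec hex
  linarith

lemma Jlev_sep (hirr : Irrational θ) {r : ℝ} (hr : 0 < r) {i : ℕ}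
    (h : 10 * r ≤ sep θ i) : 10 * r ≤ sep θ (Jlev θ r) := by
  have hex : ∃ j, sep θ (j + 1) < 10 * r := exists_sep_lt hirr (by linarith)
  have hge := Jlev_ge hirr hr h
  rcases Nat.eq_zero_or_pos (Jlev θ r) with h0 | hpos
  · have : i = 0 := by omega
    subst this
    rw [h0]
    exact h
  · obtain ⟨m, hm⟩ := Nat.exists_eq_add_of_lt hpos
    rw [Jlev, dif_pos hex] at hm ⊢
    have : m < Nat.find hex := by omega
    have h2 := Nat.find_min hex this
    push_neg at h2
    have : Nat.find hex = m + 1 := by omega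
    rw [this]
    exact h2

/-! ### The strategy -/

open Classical in
noncomputable def cW (Bd : ℝ → Set ℝ) (B : ℝ × ℝ) : ℝ × ℝ :=
  (if ∃ y ∈ Bd B.2, |y - B.1| ≤ 2 * B.2 ∧ |y - (B.1 - 7 * B.2 / 8)| < 3 * B.2 / 8
    then B.1 + 7 * B.2 / 8 else B.1 - 7 * B.2 / 8, B.2 / 8)

lemma cW_radius (Bd : ℝ → Set ℝ) (B : ℝ × ℝ) : (cW Bd B).2 = B.2 / 8 := rfl

lemma cW_center (Bd : ℝ → Set ℝ) (B : ℝ × ℝ) : |(cW Bd B).1 - B.1| = |7 * B.2 / 8| := by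
  rw [cW]
  split
  · simp only []
    rw [show B.1 + 7 * B.2 / 8 - B.1 = 7 * B.2 / 8 by ring]
  · simp only []
    rw [show B.1 - 7 * B.2 / 8 - B.1 = -(7 * B.2 / 8) by ring, abs_neg]

lemma cW_subset (Bd : ℝ → Set ℝ) (B : ℝ × ℝ) (h : 0 ≤ B.2) :
    ballOf (cW Bd B) ⊆ ballOf B := by
  have h1 : dist (cW Bd B).1 B.1 + (cW Bd B).2 ≤ B.2 := by
    rw [Real.dist_eq, cW_center, cW_radius, abs_of_nonneg (by linarith : 0 ≤ 7 * B.2 / 8)]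
    linarith
  exact Metric.closedBall_subset_closedBall' (by linarith [h1])

lemma cW_clear (Bd : ℝ → Set ℝ) {a r : ℝ} (hr : 0 < r)
    (hsep : ∀ y ∈ Bd r, ∀ y' ∈ Bd r, |y - a| ≤ 2 * r → |y' - a| ≤ 2 * r → y = y')
    {x : ℝ} (hx : x ∈ ballOf (cW Bd (a, r)))
    {y : ℝ} (hy : y ∈ Bd r) (hdisk : |y - a| ≤ 2 * r) :
    r / 4 ≤ |x - y| := by
  have hxc : |x - (cW Bd (a, r)).1| ≤ r / 8 := by
    have := hx
    rw [ballOf, Metric.mem_closedBall, Real.dist_eq, cW_radius] at this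
    exact this
  have hyc : 3 * r / 8 ≤ |y - (cW Bd (a, r)).1| := by
    rw [cW]
    split
    · rename_i h
      obtain ⟨y₀, hy₀, hy₀d, hy₀c⟩ := h
      have hyy₀ : y = y₀ := hsep y hy y₀ hy₀ hdisk hy₀d
      subst hyy₀
      have h1 : y - (a - 7 * r / 8) < 3 * r / 8 := lt_of_le_of_lt (le_abs_self _) hy₀c
      have h2 : a + 7 * r / 8 - y ≤ |y - (a + 7 * r / 8)| := by
        rw [abs_sub_comm]; exact le_abs_self _
      simp only []
      linarith
    · rename_i h
      push_neg at h
      exact h y hy hdisk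
  have htri : |y - (cW Bd (a, r)).1| ≤ |y - x| + |x - (cW Bd (a, r)).1| := abs_sub_le _ _ _
  rw [abs_sub_comm]
  linarith

/-! ### List access -/

lemma getLast_ofFn {α} {n : ℕ} (g : Fin (n + 1) → α) (d : α) :
    ((List.ofFn g).getLast?).getD d = g (Fin.last n) := by
  rw [List.ofFn_succ', List.concat_eq_append, List.getLast?_append_cons]
  rfl

noncomputable def strat (Bd : ℝ → Set ℝ) : List (ℝ × ℝ) → ℝ × ℝ :=
  fun l => cW Bd ((l.getLast?).getD (0, 1))

lemma strat_ofFn (Bd : ℝ → Set ℝ) (B : ℕ → ℝ × ℝ) (n : ℕ) :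
    strat Bd (List.ofFn (fun i : Fin (n + 1) => B i)) = cW Bd (B n) := by
  rw [strat, getLast_ofFn]
  norm_num



/-! ### The irrational case -/

lemma irrational_case (θ : ℝ) (hirr : Irrational θ) (β : ℝ) (hβ0 : 0 < β) (hβ1 : β < 1) :
    SchmidtWinning (1 / 8) β (BadPlus θ) := by
  classical
  set Bd : ℝ → Set ℝ := fun r => Gset θ (Jlev θ r) with hBd
  refine ⟨strat Bd, ?_⟩
  intro B hB0 hBlack
  have hβ8 : 0 < β / 8 := by linarith
  have hβ81 : β / 8 < 1 := by linarith
  have hrad : ∀ n, (B n).2 = (B 0).2 * (β / 8) ^ n := by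
    intro n
    induction n with
    | zero => simp
    | succ n ih =>
      rw [(hBlack n).1, strat_ofFn, cW_radius, ih]
      ring
  have hrpos : ∀ n, 0 < (B n).2 := by
    intro n
    rw [hrad n]
    exact mul_pos hB0 (pow_pos hβ8 n)
  have hstep : ∀ n, (B (n + 1)).2 = (β / 8) * (B n).2 := by
    intro n
    rw [hrad (n + 1), hrad n]
    ring
  constructor
  · intro n
    rw [strat_ofFn]
    exact ⟨by rw [cW_radius]; ring, cW_subset Bd (B n) (hrpos n).le⟩
  · intro x hx
    simp only [Set.mem_iInter] at hx
    have hxa : ∀ n, |x - (B n).1| ≤ (B n).2 := by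
      intro n
      have h := hx n
      rwa [ballOf, Metric.mem_closedBall, Real.dist_eq] at h
    have hxW : ∀ n, x ∈ ballOf (cW Bd (B n)) := by
      intro n
      have h := (hBlack n).2 (hx (n + 1))
      rwa [strat_ofFn] at h
    set μ := min (B 0).2 (β / 80) with hμ
    have hμpos : 0 < μ := lt_min hB0 (by linarith)
    have hμle : μ ≤ β / 80 := min_le_right _ _
    have hμ1 : μ ≤ 1 := by linarith
    -- the commit bounds
    have hcommit : ∀ i : ℕ, ∃ δ : ℝ, μ * sep θ i / 4 ≤ δ ∧
        ∀ y ∈ Gset θ i, δ ≤ |x - y| := by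
      intro i
      have hsp := sep_pos hirr i
      have hex : ∃ n, 10 * (B n).2 ≤ sep θ i := by
        obtain ⟨n, hn⟩ := exists_pow_lt_of_lt_one
          (show (0 : ℝ) < sep θ i / (10 * (B 0).2) by positivity) hβ81
        refine ⟨n, ?_⟩
        rw [hrad n]
        rw [lt_div_iff₀ (by positivity : (0:ℝ) < 10 * (B 0).2)] at hn
        nlinarith [hn]
      set n := Nat.find hex with hndef
      have hns : 10 * (B n).2 ≤ sep θ i := Nat.find_spec hex
      have hrn := hrpos n
      refine ⟨(B n).2 / 4, ?_, ?_⟩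
      · -- lower bound on the radius at the commit step
        have : μ * sep θ i ≤ (B n).2 := by
          rcases Nat.eq_zero_or_pos n with h0 | hpos
          · have : (B n).2 = (B 0).2 := by rw [h0]
            rw [this]
            calc μ * sep θ i ≤ (B 0).2 * 1 :=
                  mul_le_mul (min_le_left _ _) (sep_le_one i) hsp.le hB0.le
              _ = (B 0).2 := by ring
          · obtain ⟨m, hm⟩ := Nat.exists_eq_add_of_lt hpos
            have hmlt : m < n := by omega
            have hnot := Nat.find_min hex hmlt
            push_neg at hnot
            have hBn : (B n).2 = (β / 8) * (B m).2 := by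
              have : n = m + 1 := by omega
              rw [this, hstep m]
            rw [hBn]
            calc μ * sep θ i ≤ (β / 80) * sep θ i :=
                  mul_le_mul_of_nonneg_right hμle hsp.le
              _ ≤ (β / 8) * (B m).2 := by nlinarith [hnot]
        linarith
      · intro y hy
        by_cases hdisk : |y - (B n).1| ≤ 2 * (B n).2
        · -- use the strategy's clearance
          have hJ : i ≤ Jlev θ (B n).2 := Jlev_ge hirr hrn hns
          have hysub : y ∈ Bd (B n).2 := by
            obtain ⟨q, p, hq, rfl⟩ := hy
            exact ⟨q, p, lt_of_lt_of_le hq (KK_mono hirr hJ), rfl⟩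
          have hsepn : ∀ y1 ∈ Bd (B n).2, ∀ y2 ∈ Bd (B n).2,
              |y1 - (B n).1| ≤ 2 * (B n).2 → |y2 - (B n).1| ≤ 2 * (B n).2 → y1 = y2 := by
            intro y1 hy1 y2 hy2 hd1 hd2
            by_contra hne
            have hs1 := Gset_sep hirr hy1 hy2 hne
            have hs2 := Jlev_sep hirr hrn hns
            have : |y1 - y2| ≤ 4 * (B n).2 := by
              have := abs_sub_le y1 (B n).1 y2
              rw [abs_sub_comm (B n).1 y2] at this
              linarith
            linarith
          have hc := cW_clear Bd hrn hsepn (by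
              have := hxW n
              exact this) hysub hdisk
          linarith [hc]
        · push_neg at hdisk
          have h1 := hxa n
          have h2 : |y - (B n).1| ≤ |y - x| + |x - (B n).1| := abs_sub_le _ _ _
          rw [abs_sub_comm y x] at h2
          linarith
    choose δ hδ1 hδ2 using hcommit
    -- conclude x ∈ BadPlus θ
    refine ⟨μ ^ 2 / 64, by positivity, ?_⟩
    intro q hq
    have hq0 : (0 : ℝ) < (q : ℝ) := by exact_mod_cast hq
    rw [ge_iff_le, normZ]
    apply le_ciInf
    intro p
    -- window
    set i := Nat.findGreatest (fun i => KK θ i ≤ q) q with hidef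
    have hP0 : KK θ 0 ≤ q := by
      rw [show KK θ 0 = 1 from rfl]; exact hq
    have hKi : KK θ i ≤ q := Nat.findGreatest_spec (P := fun j => KK θ j ≤ q) (Nat.zero_le q) hP0
    have hKi1 : q < KK θ (i + 1) := by
      by_contra hcon
      push_neg at hcon
      have hle : i + 1 ≤ q := le_trans (lt_KK hirr (i + 1)).le hcon
      exact Nat.findGreatest_is_greatest (Nat.lt_succ_self i) hle hcon
    have hApos := KK_pos hirr i
    set A := KK θ i with hAdef
    set t := q / A with htdef
    set s := q % A with hsdef
    have hts : A * t + s = q := Nat.div_add_mod q A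
    have hs : s < A := Nat.mod_lt q hApos
    have ht1 : 1 ≤ t := (Nat.one_le_div_iff hApos).mpr hKi
    set pi := round ((A : ℝ) * θ) with hpidef
    have hεi : |(A : ℝ) * θ - (pi : ℝ)| = sep θ (i + 1) := rfl
    have hqR : (q : ℝ) = (A : ℝ) * (t : ℝ) + (s : ℝ) := by
      rw [← hts]; push_cast; ring
    set y : ℝ := (s : ℝ) * θ - ((p - (t : ℤ) * pi : ℤ) : ℝ) with hydef
    have hyG : y ∈ Gset θ i := ⟨s, p - (t : ℤ) * pi, hs, rfl⟩
    clear_value y pi s t A i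
    have hiden : θ * (q : ℝ) - x - (p : ℝ) = (y - x) + (t : ℝ) * ((A : ℝ) * θ - (pi : ℝ)) := by
      rw [hydef, hqR]; push_cast; ring
    set E := |θ * (q : ℝ) - x - (p : ℝ)| with hEdef
    have hEnn : 0 ≤ E := abs_nonneg _
    -- key quantities
    have hkey : 1 ≤ 2 * (A : ℝ) * sep θ i := by rw [hAdef]; exact key_ineq hirr i
    have hsp : 0 < sep θ i := sep_pos hirr i
    have hsp1 : 0 < sep θ (i + 1) := sep_pos hirr (i + 1)
    have hδi := hδ1 i
    have hδi1 := hδ1 (i + 1)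
    have hA1 : (1 : ℝ) ≤ (A : ℝ) := by exact_mod_cast hApos
    clear_value μ Bd
    clear hμ hBd hidef hydef hAdef htdef hsdef hpidef hP0 hx hxW hxa hBlack hrad hrpos hstep hB0 hβ8 hβ81
    rw [div_le_iff₀ hq0]
    rcases le_or_gt ((t : ℝ) * sep θ (i + 1)) (δ i / 2) with hcA | hcB
    · -- case A
      have h1 : δ i ≤ |x - y| := hδ2 i y hyG
      have h2 : |y - x| ≤ E + (t : ℝ) * sep θ (i + 1) := by
        have heq : y - x = (θ * (q : ℝ) - x - (p : ℝ)) + (-((t : ℝ) * ((A : ℝ) * θ - (pi : ℝ)))) := by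
          rw [hiden]; ring
        calc |y - x| ≤ |θ * (q : ℝ) - x - (p : ℝ)| + |-((t : ℝ) * ((A : ℝ) * θ - (pi : ℝ)))| := by
              rw [heq]; exact abs_add_le _ _
          _ = E + (t : ℝ) * sep θ (i + 1) := by
              rw [abs_neg, abs_mul, Nat.abs_cast, hεi, hEdef]
      rw [abs_sub_comm y x] at h2
      have hE2 : δ i / 2 ≤ E := by linarith
      -- E * q ≥ (δ i/2) * A ≥ (μ sep_i/8) A ≥ μ/16 ≥ μ²/64
      have hqA : (A : ℝ) ≤ (q : ℝ) := by exact_mod_cast hKi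
      have h3 : δ i / 2 * (A : ℝ) ≤ E * (q : ℝ) :=
        mul_le_mul hE2 hqA (by positivity) hEnn
      have h4 : μ * sep θ i / 8 * (A : ℝ) ≤ δ i / 2 * (A : ℝ) := by
        nlinarith [hδi, hA1]
      have h5 : μ / 16 ≤ μ * sep θ i / 8 * (A : ℝ) := by
        have hh := mul_le_mul_of_nonneg_left hkey hμpos.le
        linarith [hh]
      have h6 : μ * μ ≤ μ := by
        have hh := mul_le_mul_of_nonneg_left hμ1 hμpos.le
        linarith [hh]
      linarith [h3, h4, h5, h6]
    · -- case B
      have hptG : θ * (q : ℝ) - (p : ℝ) ∈ Gset θ (i + 1) := ⟨q, p, hKi1, by ring⟩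
      have h1 : δ (i + 1) ≤ |x - (θ * (q : ℝ) - (p : ℝ))| := hδ2 (i + 1) _ hptG
      have hEeq : E = |x - (θ * (q : ℝ) - (p : ℝ))| := by
        rw [hEdef, abs_sub_comm]
        congr 1
        ring
      have hE1 : δ (i + 1) ≤ E := by rw [hEeq]; exact h1
      -- q ≥ t * A, q * sep_{i+1} ≥ A * (t * sep_{i+1}) ≥ A * δ i / 2 ≥ μ/16
      have hqtA : (A : ℝ) * (t : ℝ) ≤ (q : ℝ) := by
        rw [hqR]
        have : (0 : ℝ) ≤ (s : ℝ) := Nat.cast_nonneg s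
        linarith
      have h2 : (A : ℝ) * (δ i / 2) ≤ (A : ℝ) * ((t : ℝ) * sep θ (i + 1)) := by
        apply mul_le_mul_of_nonneg_left hcB.le (by positivity)
      have h3 : (A : ℝ) * ((t : ℝ) * sep θ (i + 1)) ≤ (q : ℝ) * sep θ (i + 1) := by
        rw [← mul_assoc]
        exact mul_le_mul_of_nonneg_right hqtA hsp1.le
      have h4 : μ * sep θ i / 8 * (A : ℝ) ≤ (A : ℝ) * (δ i / 2) := by
        have hh := mul_le_mul_of_nonneg_left hδi (by positivity : (0:ℝ) ≤ (A : ℝ))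
        linarith [hh]
      have h5 : μ / 16 ≤ μ * sep θ i / 8 * (A : ℝ) := by
        have hh := mul_le_mul_of_nonneg_left hkey hμpos.le
        linarith [hh]
      -- E ≥ δ (i+1) ≥ μ sep_{i+1}/4
      have h6 : μ * sep θ (i + 1) / 4 ≤ E := le_trans (hδ1 (i + 1)) hE1
      -- E * q ≥ (μ sep_{i+1}/4) * q = (μ/4) (q sep_{i+1}) ≥ (μ/4)(μ/16)
      have h7 : μ / 16 ≤ (q : ℝ) * sep θ (i + 1) := by linarith
      have h8 : μ * sep θ (i + 1) / 4 * (q : ℝ) ≤ E * (q : ℝ) :=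
        mul_le_mul_of_nonneg_right h6 hq0.le
      have h9 := mul_le_mul_of_nonneg_left h7 (by positivity : (0:ℝ) ≤ μ / 4)
      linarith [h8, h9]

/-! ### The rational case -/

lemma rational_case (θ : ℝ) (hrat : ¬ Irrational θ) (β : ℝ) (hβ0 : 0 < β) (hβ1 : β < 1) :
    SchmidtWinning (1 / 8) β (BadPlus θ) := by
  classical
  rw [Irrational, not_not] at hrat
  obtain ⟨qq, hqq⟩ := hrat
  have hden : (0 : ℝ) < (qq.den : ℝ) := by exact_mod_cast qq.pos
  set Bd : ℝ → Set ℝ := fun _ => {y | ∃ m : ℤ, y = (m : ℝ) / (qq.den : ℝ)} with hBd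
  refine ⟨strat Bd, ?_⟩
  intro B hB0 hBlack
  have hβ8 : 0 < β / 8 := by linarith
  have hβ81 : β / 8 < 1 := by linarith
  have hrad : ∀ n, (B n).2 = (B 0).2 * (β / 8) ^ n := by
    intro n
    induction n with
    | zero => simp
    | succ n ih =>
      rw [(hBlack n).1, strat_ofFn, cW_radius, ih]
      ring
  have hrpos : ∀ n, 0 < (B n).2 := by
    intro n
    rw [hrad n]
    exact mul_pos hB0 (pow_pos hβ8 n)
  constructor
  · intro n
    rw [strat_ofFn]
    exact ⟨by rw [cW_radius]; ring, cW_subset Bd (B n) (hrpos n).le⟩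
  · intro x hx
    simp only [Set.mem_iInter] at hx
    have hxa : ∀ n, |x - (B n).1| ≤ (B n).2 := by
      intro n
      have h := hx n
      rwa [ballOf, Metric.mem_closedBall, Real.dist_eq] at h
    have hxW : ∀ n, x ∈ ballOf (cW Bd (B n)) := by
      intro n
      have h := (hBlack n).2 (hx (n + 1))
      rwa [strat_ofFn] at h
    -- commit step
    have hex : ∃ n, 10 * (B n).2 ≤ 1 / (qq.den : ℝ) := by
      obtain ⟨n, hn⟩ := exists_pow_lt_of_lt_one
        (show (0 : ℝ) < (1 / (qq.den : ℝ)) / (10 * (B 0).2) by positivity) hβ81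
      refine ⟨n, ?_⟩
      rw [hrad n]
      rw [lt_div_iff₀ (by positivity : (0:ℝ) < 10 * (B 0).2)] at hn
      nlinarith [hn]
    set n := Nat.find hex with hndef
    have hns : 10 * (B n).2 ≤ 1 / (qq.den : ℝ) := Nat.find_spec hex
    have hrn := hrpos n
    have hsepn : ∀ y1 ∈ Bd (B n).2, ∀ y2 ∈ Bd (B n).2,
        |y1 - (B n).1| ≤ 2 * (B n).2 → |y2 - (B n).1| ≤ 2 * (B n).2 → y1 = y2 := by
      intro y1 hy1 y2 hy2 hd1 hd2
      obtain ⟨m1, rfl⟩ := hy1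
      obtain ⟨m2, rfl⟩ := hy2
      by_contra hne
      have hm : m1 ≠ m2 := by
        intro h; exact hne (by rw [h])
      have h1 : (1 : ℝ) ≤ |((m1 - m2 : ℤ) : ℝ)| := by
        have : m1 - m2 ≠ 0 := sub_ne_zero.mpr hm
        calc (1 : ℝ) = ((1 : ℤ) : ℝ) := by norm_num
          _ ≤ ((|m1 - m2| : ℤ) : ℝ) := by exact_mod_cast Int.one_le_abs this
          _ = |((m1 - m2 : ℤ) : ℝ)| := by push_cast; rfl
      have h2 : (m1 : ℝ) / (qq.den : ℝ) - (m2 : ℝ) / (qq.den : ℝ)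
          = ((m1 - m2 : ℤ) : ℝ) / (qq.den : ℝ) := by push_cast; ring
      have h3 : 1 / (qq.den : ℝ) ≤ |(m1 : ℝ) / (qq.den : ℝ) - (m2 : ℝ) / (qq.den : ℝ)| := by
        rw [h2, abs_div, abs_of_pos hden]
        exact (div_le_div_iff_of_pos_right hden).mpr h1
      have h4 : |(m1 : ℝ) / (qq.den : ℝ) - (m2 : ℝ) / (qq.den : ℝ)| ≤ 4 * (B n).2 := by
        have := abs_sub_le ((m1 : ℝ) / (qq.den : ℝ)) (B n).1 ((m2 : ℝ) / (qq.den : ℝ))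
        rw [abs_sub_comm (B n).1 _] at this
        linarith
      linarith
    have hclear : ∀ y ∈ Bd (B n).2, (B n).2 / 4 ≤ |x - y| := by
      intro y hy
      by_cases hdisk : |y - (B n).1| ≤ 2 * (B n).2
      · exact cW_clear Bd hrn hsepn (hxW n) hy hdisk
      · push_neg at hdisk
        have h1 := hxa n
        have h2 : |y - (B n).1| ≤ |y - x| + |x - (B n).1| := abs_sub_le _ _ _
        rw [abs_sub_comm y x] at h2
        linarith
    refine ⟨(B n).2 / 4, by positivity, ?_⟩
    intro q hq
    have hq0 : (0 : ℝ) < (q : ℝ) := by exact_mod_cast hq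
    rw [ge_iff_le, normZ]
    apply le_ciInf
    intro p
    have hpt : θ * (q : ℝ) - (p : ℝ)
        = (((q : ℤ) * qq.num - p * (qq.den : ℤ) : ℤ) : ℝ) / (qq.den : ℝ) := by
      rw [← hqq, Rat.cast_def]
      push_cast
      field_simp
    have hmem : θ * (q : ℝ) - (p : ℝ) ∈ Bd (B n).2 :=
      ⟨(q : ℤ) * qq.num - p * (qq.den : ℤ), hpt⟩
    have h1 := hclear _ hmem
    have h2 : |θ * (q : ℝ) - x - (p : ℝ)| = |x - (θ * (q : ℝ) - (p : ℝ))| := by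
      rw [abs_sub_comm]
      congr 1
      ring
    have h3 : (B n).2 / 4 / (q : ℝ) ≤ (B n).2 / 4 :=
      div_le_self (by positivity) (by exact_mod_cast hq)
    rw [h2]
    linarith

end SchmidtAux

/-- For any real number `θ`, `Bad⁺_θ` is a `1/8`-winning set. -/
theorem badPlus_is_one_eighth_winning (θ : ℝ) :
    SchmidtAlphaWinning (1 / 8) (BadPlus θ) := by
  intro β hβ0 hβ1
  by_cases hirr : Irrational θ
  · exact SchmidtAux.irrational_case θ hirr β hβ0 hβ1
  · exact SchmidtAux.rational_case θ hirr β hβ0 hβ1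
end

section
/- If θ is a rational number, then Bad⁺_θ = ℝ \ {θq − p : q ∈ ℕ, q ≥ 1, p ∈ ℤ}; that is, x ∈ Bad⁺_θ if and only if θq − x is not an integer for every natural number q ≥ 1. -/
lemma normZ_eq_round (x : ℝ) : normZ x = |x - (round x : ℝ)| := by
  apply le_antisymm
  · exact ciInf_le ⟨0, fun y ⟨p, hp⟩ => hp ▸ abs_nonneg _⟩ (round x)
  · apply le_ciInf
    intro p
    by_cases hp : p = round x
    · simp [hp]
    · have h1 : (1 : ℝ) ≤ |(round x : ℝ) - p| := by
        have : (1 : ℤ) ≤ |round x - p| := Int.one_le_abs (sub_ne_zero.mpr (Ne.symm hp))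
        exact_mod_cast this
      have h2 : |x - (round x : ℝ)| ≤ 1 / 2 := abs_sub_round x
      have h3 : |(round x : ℝ) - p| ≤ |x - (round x : ℝ)| + |x - p| := by
        have := abs_sub_abs_le_abs_sub ((round x : ℝ) - p) (x - p)
        calc |(round x : ℝ) - p| = |((round x : ℝ) - x) + (x - p)| := by ring_nf
          _ ≤ |(round x : ℝ) - x| + |x - p| := abs_add_le _ _
          _ = |x - (round x : ℝ)| + |x - p| := by rw [abs_sub_comm]
      linarith

lemma normZ_nonneg (x : ℝ) : 0 ≤ normZ x := by
  rw [normZ_eq_round]; exact abs_nonneg _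

lemma normZ_intCast (p : ℤ) : normZ (p : ℝ) = 0 := by
  rw [normZ_eq_round, round_intCast]; simp

lemma normZ_pos (x : ℝ) (h : ∀ p : ℤ, x ≠ (p : ℝ)) : 0 < normZ x := by
  rw [normZ_eq_round]
  rw [abs_pos, sub_ne_zero]
  exact h (round x)

lemma normZ_add_int (x : ℝ) (n : ℤ) : normZ (x + n) = normZ x := by
  rw [normZ_eq_round, normZ_eq_round, round_add_intCast]
  push_cast
  ring_nf

/-- If `θ` is rational, then `Bad⁺_θ` consists exactly of those `x` such that
`θq − x` is not an integer for every natural number `q ≥ 1`. -/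
theorem badPlus_of_rational (θ : ℝ) (hθ : ∃ r : ℚ, (r : ℝ) = θ) :
    BadPlus θ = {x : ℝ | ∀ q : ℕ, 1 ≤ q → ∀ p : ℤ, θ * q - x ≠ (p : ℝ)} := by
  ext x
  simp only [BadPlus, Set.mem_setOf_eq]
  constructor
  · rintro ⟨c, hc, h⟩ q hq p hxp
    have h1 := h q hq
    rw [hxp, normZ_intCast] at h1
    have : (0:ℝ) < c / q := div_pos hc (by exact_mod_cast hq)
    linarith
  · intro h
    obtain ⟨r, rfl⟩ := hθ
    set b := r.den with hb
    have hb1 : 1 ≤ b := r.pos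
    have hne : (Finset.Icc 1 b).Nonempty := ⟨1, by simp [hb1]⟩
    set m := (Finset.Icc 1 b).inf' hne (fun q => normZ ((r:ℝ) * q - x)) with hm
    have hmpos : 0 < m := by
      rw [hm, Finset.lt_inf'_iff]
      intro q hq
      exact normZ_pos _ (h q (Finset.mem_Icc.mp hq).1)
    refine ⟨m, hmpos, fun q hq => ?_⟩
    set q' := (q - 1) % b + 1 with hq'
    clear_value q'
    have hq'mem : q' ∈ Finset.Icc 1 b := by
      rw [Finset.mem_Icc]
      constructor
      · omega
      · have := Nat.mod_lt (q - 1) (show 0 < b by omega)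
        omega
    set k := (q - 1) / b with hk
    clear_value k
    have hqeq : q = q' + b * k := by
      have := Nat.div_add_mod (q - 1) b
      rw [hq', hk]
      omega
    have hrb : (r:ℝ) * b = (r.num : ℤ) := by
      have h0 : (r * (r.den:ℚ) : ℚ) = (r.num : ℚ) := Rat.mul_den_eq_num r
      rw [hb]
      exact_mod_cast h0
    have heq : (r:ℝ) * q - x = ((r:ℝ) * q' - x) + ((r.num * k : ℤ) : ℝ) := by
      rw [hqeq]
      push_cast
      rw [show (r:ℝ) * (↑q' + ↑b * ↑k) = (r:ℝ) * q' + ((r:ℝ) * b) * k by ring, hrb]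
      ring
    have hnorm : normZ ((r:ℝ) * q - x) = normZ ((r:ℝ) * q' - x) := by
      rw [heq, normZ_add_int]
    have h1 : m ≤ normZ ((r:ℝ) * q - x) := by
      rw [hnorm]
      exact Finset.inf'_le _ hq'mem
    have h2 : m / q ≤ m := by
      apply div_le_self hmpos.le
      exact_mod_cast hq
    linarith
end
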